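/- Let $H \subseteq G$ be an admissible subgraph of a directed acyclic graph $G$. Then there is a vector $\mathbf d = (d_v)_{v \in V(H_{comp})} \in \mathbb R^{V(H_{comp})}$ such that $\mathsf{wd}(e) + d_{s(e)} - d_{t(e)} > -1$ for every edge $e \in E(H_{comp})$, where $s(e)$ and $t(e)$ are the source and target of $e$. -/

import Mathlib

/-- Undirected adjacency underlying the subgraph `H`. -/
def UAdj {n : ℕ} (E : Set (Fin n × Fin n)) (u v : Fin n) : Prop :=
  (u, v) ∈ E ∨ (v, u) ∈ E

/-- `u` and `v` lie in the same connected component of the underlying undirected graph. -/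
def SameComp {n : ℕ} (E : Set (Fin n × Fin n)) : Fin n → Fin n → Prop :=
  Relation.ReflTransGen (UAdj E)

/-- `H ⊆ G` is admissible with respect to the weight function `w`: every directed cycle in
the component multigraph `H_comp` (a cyclic sequence of edges of `E(G) \ E(H)`, the target of
each lying in the same component of `H^un` as the source of the next) satisfies
`∑ wd(e) > -|cycle|`, where `wd(e) = w(source) - w(target)`. -/
def Admissible {n : ℕ} (E EH : Set (Fin n × Fin n)) (w : Fin n → ℤ) : Prop :=
  ∀ (k : ℕ) (c : Fin (k + 1) → Fin n × Fin n),
    (∀ i, c i ∈ E ∧ c i ∉ EH) →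
    (∀ i : Fin (k + 1), SameComp EH (c i).2 (c (i + 1)).1) →
    -((k : ℤ) + 1) < ∑ i, (w (c i).1 - w (c i).2)

namespace Stmt14

lemma samecomp_symm {n : ℕ} {E : Set (Fin n × Fin n)} {u v : Fin n}
    (h : SameComp E u v) : SameComp E v u :=
  (@Relation.ReflTransGen.stdSymm _ _ ⟨fun _ _ h => h.symm⟩).symm _ _ h

lemma samecomp_trans {n : ℕ} {E : Set (Fin n × Fin n)} {u v x : Fin n}
    (h : SameComp E u v) (h' : SameComp E v x) : SameComp E u x :=
  Relation.ReflTransGen.trans h h'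

variable {n : ℕ}

noncomputable def cst (w : Fin n → ℤ) (e : Fin n × Fin n) : ℝ :=
  ((w e.1 : ℝ) - (w e.2 : ℝ)) + 1 - 1 / ((n : ℝ) + 2)

noncomputable def cost (w : Fin n → ℤ) (l : List (Fin n × Fin n)) : ℝ :=
  (l.map (cst w)).sum

def IsWalk (E EH : Set (Fin n × Fin n)) (l : List (Fin n × Fin n)) (v : Fin n) : Prop :=
  (∀ e ∈ l, e ∈ E ∧ e ∉ EH) ∧
  l.Chain' (fun a b => SameComp EH a.2 b.1) ∧
  (∀ e ∈ l.getLast?, SameComp EH e.2 v)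

lemma cost_cycle_nonneg {E EH : Set (Fin n × Fin n)} {w : Fin n → ℤ}
    (hadm : Admissible E EH w) (m : List (Fin n × Fin n)) (hne : m ≠ [])
    (hlen : m.length ≤ n + 1)
    (hmem : ∀ e ∈ m, e ∈ E ∧ e ∉ EH)
    (hchain : m.Chain' (fun a b => SameComp EH a.2 b.1))
    (hwrap : SameComp EH (m.getLast hne).2 (m.head hne).1) :
    0 ≤ cost w m := by
  obtain ⟨k, hk⟩ : ∃ k, m.length = k + 1 :=
    Nat.exists_eq_succ_of_ne_zero (fun h => hne (List.length_eq_zero_iff.1 h))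
  set c : Fin (k + 1) → Fin n × Fin n := fun i => m[(i : ℕ)]'(by omega) with hc
  have hcyc : ∀ i : Fin (k + 1), SameComp EH (c i).2 (c (i + 1)).1 := by
    intro i
    rcases lt_or_eq_of_le (Nat.lt_succ_iff.1 i.isLt) with hi | hi
    · have hv : ((i + 1 : Fin (k+1)) : ℕ) = (i : ℕ) + 1 := by
        rw [Fin.val_add_one_of_lt]
        exact (Fin.lt_iff_val_lt_val).2 (by simp [Fin.last]; omega)
      have := (List.isChain_iff_getElem.1 hchain) (i : ℕ) (by omega)
      simpa [hc, hv, List.get_eq_getElem] using this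
    · have hi' : i = Fin.last k := by ext; simpa using hi
      have hv : ((i + 1 : Fin (k+1)) : ℕ) = 0 := by
        rw [hi', Fin.last_add_one]; rfl
      have h1 : c i = m.getLast hne := by
        rw [List.getLast_eq_getElem]; simp [hc, hi', hk]
      have h2 : c (i + 1) = m.head hne := by
        rw [List.head_eq_getElem_zero hne]; simp [hc, hv]
      rw [h1, h2]; exact hwrap
  have hZ := hadm k c (fun i => hmem _ (List.getElem_mem _)) hcyc
  have hZ' : (-(k : ℤ)) ≤ ∑ i, (w (c i).1 - w (c i).2) := by omega
  have hcost : cost w m = (((∑ i, (w (c i).1 - w (c i).2)) : ℤ) : ℝ)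
      + (k + 1) * (1 - 1 / ((n : ℝ) + 2)) := by
    have e1 : cost w m = ∑ i : Fin (k + 1), cst w (c i) := by
      rw [cost, ← Fin.sum_univ_fun_getElem,
        ← Fin.sum_congr' (fun i : Fin m.length => cst w m[i.val]) hk.symm]
      exact Finset.sum_congr rfl (fun i _ => rfl)
    have e2 : ∀ i : Fin (k + 1), cst w (c i)
        = (((w (c i).1 - w (c i).2 : ℤ)) : ℝ) + (1 - 1 / ((n : ℝ) + 2)) := by
      intro i; simp only [cst]; push_cast; ring
    rw [e1, Finset.sum_congr rfl (fun i _ => e2 i), Finset.sum_add_distrib,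
      ← Int.cast_sum]
    simp [mul_comm]; ring
  have hnn : (0:ℝ) < (n : ℝ) + 2 := by positivity
  have hklen : (k : ℝ) + 1 ≤ (n : ℝ) + 1 := by
    have : k + 1 ≤ n + 1 := by omega
    exact_mod_cast this
  have : ((-(k:ℤ) : ℤ) : ℝ) ≤ (((∑ i, (w (c i).1 - w (c i).2)) : ℤ) : ℝ) := by
    exact_mod_cast hZ'
  rw [hcost]
  have h1 : ((k:ℝ) + 1) * (1 / ((n : ℝ) + 2)) ≤ 1 := by
    rw [mul_one_div, div_le_one hnn]; linarith
  push_cast at this ⊢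
  nlinarith

lemma shorten {E EH : Set (Fin n × Fin n)} {w : Fin n → ℤ}
    (hadm : Admissible E EH w) (l : List (Fin n × Fin n)) (v : Fin n)
    (hwalk : IsWalk E EH l v) (hlen : l.length ≤ n + 1) :
    ∃ l', IsWalk E EH l' v ∧ l'.length ≤ n ∧ cost w l' ≤ cost w l := by
  by_cases h : l.length ≤ n
  · exact ⟨l, hwalk, h, le_refl _⟩
  have hlen' : l.length = n + 1 := by omega
  obtain ⟨hmem, hchain, hend⟩ := hwalk
  obtain ⟨a, b, hab, heq⟩ := Fintype.exists_ne_map_eq_of_card_lt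
    (fun i : Fin l.length => (l.get i).1) (by simp [hlen'])
  obtain ⟨i, j, hil, hjl, hij, hije⟩ : ∃ (i j : ℕ) (_ : i < l.length)
      (_ : j < l.length), i < j ∧ (l[i]'(by omega)).1 = (l[j]'(by omega)).1 := by
    rcases Nat.lt_or_ge a.val b.val with h' | h'
    · exact ⟨a, b, a.isLt, b.isLt, h', by simpa [List.get_eq_getElem] using heq⟩
    · have hba : b.val < a.val :=
        lt_of_le_of_ne h' (fun hh => hab (Fin.ext hh.symm))
      exact ⟨b, a, b.isLt, a.isLt, hba, by simpa [List.get_eq_getElem] using heq.symm⟩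
  set l₁ := l.take i with hl1
  set m := (l.drop i).take (j - i) with hm
  set l₂ := l.drop j with hl2
  have hml2 : m ++ l₂ = l.drop i := by
    rw [hm, hl2]
    have := List.drop_take_append_drop l i (j - i)
    rwa [show i + (j - i) = j by omega] at this
  have hsplit : l = l₁ ++ (m ++ l₂) := by
    rw [hml2, hl1, List.take_append_drop]
  have hl1len : l₁.length = i := by simp [hl1]; omega
  have hmlen : m.length = j - i := by simp [hm]; omega
  have hl2len : l₂.length = l.length - j := by simp [hl2]
  have hmne : m ≠ [] := by
    intro hnil; rw [hnil] at hmlen; simp at hmlen; omega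
  have hl2ne : l₂ ≠ [] := by
    intro hnil; rw [hnil] at hl2len; simp at hl2len; omega
  -- the middle is a cycle with nonnegative cost
  have hmid : 0 ≤ cost w m := by
    refine cost_cycle_nonneg hadm m hmne (by omega)
      (fun e he => hmem e (((List.take_sublist _ _).trans (List.drop_sublist _ _)).mem he))
      (List.IsChain.infix hchain ⟨l₁, l₂, by rw [hsplit, List.append_assoc]⟩) ?_
    have hgl : m.getLast hmne = l[j-1]'(by omega) := by
      rw [List.getLast_eq_getElem]
      simp only [hm, List.getElem_take, List.getElem_drop]
      congr 1
      simp only [List.length_take, List.length_drop]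
      omega
    have hhd : m.head hmne = l[i]'(by omega) := by
      rw [List.head_eq_getElem_zero]
      simp only [hm, List.getElem_take, List.getElem_drop]
      congr 1
    rw [hgl, hhd]
    have := (List.isChain_iff_getElem.1 hchain) (j - 1) (by omega)
    simp only [show j - 1 + 1 = j from by omega] at this
    exact (congrArg (fun x : Fin n =>
      SameComp EH (l[j-1]'(by omega)).2 x) hije).mpr this
  refine ⟨l₁ ++ l₂, ⟨?_, ?_, ?_⟩, by rw [List.length_append]; omega, ?_⟩
  · intro e he
    rcases List.mem_append.1 he with he | he
    · exact hmem e ((List.take_sublist _ _).mem he)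
    · exact hmem e ((List.drop_sublist _ _).mem he)
  · refine List.isChain_append.2 ⟨List.IsChain.prefix hchain (List.take_prefix _ _),
      List.IsChain.suffix hchain (List.drop_suffix _ _), ?_⟩
    intro x hx y hy
    have hl1ne : l₁ ≠ [] := by intro hnil; rw [hnil] at hx; simp at hx
    have hipos : 0 < i := by
      by_contra hip
      have : i = 0 := by omega
      rw [this] at hl1len
      exact hl1ne (List.length_eq_zero_iff.1 hl1len)
    have hx' : x = l[i-1]'(by omega) := by
      rw [List.getLast?_eq_getLast hl1ne] at hx
      simp only [Option.mem_def, Option.some.injEq] at hx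
      subst hx
      rw [List.getLast_eq_getElem]
      simp only [hl1, List.getElem_take]
      congr 1
      simp only [List.length_take]
      omega
    have hy' : y = l[j]'(by omega) := by
      rw [hl2, List.head?_drop, List.getElem?_eq_getElem (by omega)] at hy
      simpa using hy.symm
    subst hx'; subst hy'
    have := (List.isChain_iff_getElem.1 hchain) (i - 1) (by omega)
    simp only [show i - 1 + 1 = i from by omega] at this
    exact (congrArg (fun x : Fin n =>
      SameComp EH (l[i-1]'(by omega)).2 x) hije).mp this
  · intro e he
    rw [List.getLast?_append_of_ne_nil _ hl2ne,
      List.getLast?_eq_getLast hl2ne] at he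
    simp only [Option.mem_def, Option.some.injEq] at he
    subst he
    have hne : l ≠ [] := by
      intro hnil; rw [hnil] at hlen'; simp at hlen'
    have hgl2 : l₂.getLast hl2ne = l.getLast hne := List.getLast_drop hl2ne
    rw [hgl2]
    exact hend _ (by rw [List.getLast?_eq_getLast hne]; rfl)
  · have hc1 : cost w (l₁ ++ l₂) = cost w l₁ + cost w l₂ := by simp [cost]
    have hc2 : cost w l = cost w l₁ + (cost w m + cost w l₂) := by
      nth_rewrite 1 [hsplit]; simp [cost]
    rw [hc1, hc2]; linarith

end Stmt14

/-- For an admissible subgraph `H ⊆ G` there is a vector `d`, indexed by the components of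
`H^un` (i.e. a function on vertices constant on components), with
`wd(e) + d_{s(e)} - d_{t(e)} > -1` for every edge `e` of `H_comp`. -/
theorem stmt14 (n : ℕ) (E EH : Set (Fin n × Fin n))
    (hE : ∀ e ∈ E, e.1 < e.2) (hH : EH ⊆ E)
    (w : Fin n → ℤ) (hw : ∀ e ∈ EH, w e.2 = w e.1 + 1)
    (hadm : Admissible E EH w) :
    ∃ d : Fin n → ℝ, (∀ u v : Fin n, SameComp EH u v → d u = d v) ∧
      ∀ e ∈ E, e ∉ EH →
        (-1 : ℝ) < ((w e.1 : ℝ) - (w e.2 : ℝ)) + d e.1 - d e.2 := by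
  classical
  set S : Fin n → Set ℝ := fun v =>
    {x | ∃ l, l.length ≤ n ∧ Stmt14.IsWalk E EH l v ∧ x = Stmt14.cost w l} with hS
  have hSne : ∀ v, (S v).Nonempty := fun v =>
    ⟨Stmt14.cost w [], [], by simp, ⟨by simp, List.isChain_nil, by simp⟩, rfl⟩
  have hSfin : ∀ v, (S v).Finite := by
    intro v
    apply Set.Finite.subset ((List.finite_length_le (Fin n × Fin n) n).image (Stmt14.cost w))
    rintro x ⟨l, hl, -, rfl⟩
    exact ⟨l, hl, rfl⟩
  set d : Fin n → ℝ := fun v => sInf (S v) with hd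
  have hdmem : ∀ v, d v ∈ S v := fun v => (hSne v).csInf_mem (hSfin v)
  have hdle : ∀ v x, x ∈ S v → d v ≤ x := fun v x hx => csInf_le (hSfin v).bddBelow hx
  refine ⟨d, ?_, ?_⟩
  · intro u v huv
    have hSeq : S u = S v := by
      ext x
      constructor
      · rintro ⟨l, h1, ⟨h2, h3, h4⟩, rfl⟩
        exact ⟨l, h1, ⟨h2, h3, fun e he => Stmt14.samecomp_trans (h4 e he) huv⟩, rfl⟩
      · rintro ⟨l, h1, ⟨h2, h3, h4⟩, rfl⟩
        exact ⟨l, h1, ⟨h2, h3, fun e he =>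
          Stmt14.samecomp_trans (h4 e he) (Stmt14.samecomp_symm huv)⟩, rfl⟩
    simp only [hd, hSeq]
  · intro e he heH
    obtain ⟨l, hllen, hlwalk, hlcost⟩ := hdmem e.1
    have hwalk' : Stmt14.IsWalk E EH (l ++ [e]) e.2 := by
      obtain ⟨h2, h3, h4⟩ := hlwalk
      refine ⟨?_, ?_, ?_⟩
      · intro f hf
        rcases List.mem_append.1 hf with hf | hf
        · exact h2 f hf
        · simp at hf; subst hf; exact ⟨he, heH⟩
      · refine List.isChain_append.2 ⟨h3, by simp, ?_⟩
        intro x hx y hy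
        simp at hy; subst hy
        exact h4 x hx
      · intro f hf
        rw [List.getLast?_concat] at hf
        simp at hf; subst hf
        exact Relation.ReflTransGen.refl
    obtain ⟨l'', hwalk'', hlen'', hcost''⟩ :=
      Stmt14.shorten hadm (l ++ [e]) e.2 hwalk' (by simp; omega)
    have h1 : d e.2 ≤ Stmt14.cost w l'' := hdle _ _ ⟨l'', hlen'', hwalk'', rfl⟩
    have h2 : Stmt14.cost w (l ++ [e]) = d e.1 + Stmt14.cst w e := by
      rw [hlcost]; simp [Stmt14.cost]
    have hfin : d e.2 ≤ d e.1 + Stmt14.cst w e := by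
      rw [← h2]; exact h1.trans hcost''
    have hpos : 0 < 1 / ((n : ℝ) + 2) := by positivity
    simp only [Stmt14.cst] at hfin
    linarith
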